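/- arXiv:0903.4969 — 2 statements merged into one kernel-verified Lean document; each statement's English description precedes it below -/
import Mathlib

section
/- Let n ≥ 2. In the polynomial ring 𝔽₂[t₁,…,tₙ] the following factorization holds: ∏_{1≤j<k≤n} (1 + t_j + t_k) = (∏_{1≤j<k≤n−1} (1 + t_j + t_k)) · ( Σ_{k=0}^{n−1} tₙ^k · Σ_{l=0}^{n−1−k} C(n−1−l, k) · ē_l ), where ē_l denotes the l-th elementary symmetric polynomial in t₁,…,t_{n−1} (with ē₀ = 1) and C(·,·) is the binomial coefficient reduced mod 2. Equivalently, ∏_{i=1}^{n−1} (1 + t_i + tₙ) = Σ_{k=0}^{n−1} tₙ^k Σ_{l=0}^{n−1−k} C(n−1−l, k) ē_l in 𝔽₂[t₁,…,tₙ]. -/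
open MvPolynomial Finset

/-- The sum `Σ_{k=0}^{n} tₙ₊₁^k Σ_{l=0}^{n−k} C(n−l, k)·ē_l` appearing in the
inductive step, where `ē_l` is the `l`-th elementary symmetric polynomial in the
first `n` variables and the binomial coefficient is reduced mod 2. -/
noncomputable def inductiveSum (n : ℕ) : MvPolynomial (Fin (n + 1)) (ZMod 2) :=
  ∑ k ∈ Finset.range (n + 1), (X (Fin.last n)) ^ k *
    ∑ l ∈ Finset.range (n - k + 1),
      (Nat.choose (n - l) k : MvPolynomial (Fin (n + 1)) (ZMod 2)) *
        rename Fin.castSucc (esymm (Fin n) (ZMod 2) l)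

lemma key (n : ℕ) :
    ((∏ i : Fin n, (1 + X i.castSucc + X (Fin.last n)) :
        MvPolynomial (Fin (n + 1)) (ZMod 2)) = inductiveSum n) := by
  classical
  set t : MvPolynomial (Fin (n + 1)) (ZMod 2) := X (Fin.last n) with ht
  set s : Multiset (MvPolynomial (Fin (n + 1)) (ZMod 2)) :=
    (Finset.univ.val.map (fun i : Fin n => X i.castSucc)) with hs
  have hcard : Multiset.card s = n := by simp [hs]
  have h := Multiset.prod_X_add_C_eq_sum_esymm s
  have h2 := congrArg (Polynomial.eval (1 + t)) h
  rw [hcard] at h2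
  have hL : Polynomial.eval (1 + t) (Multiset.map (fun r => Polynomial.X + Polynomial.C r) s).prod
      = ∏ i : Fin n, (1 + X i.castSucc + t) := by
    rw [hs, Multiset.map_map]
    rw [Polynomial.eval_multiset_prod, Multiset.map_map]
    simp only [Function.comp, Polynomial.eval_add, Polynomial.eval_X, Polynomial.eval_C]
    rw [Finset.prod_eq_multiset_prod]
    exact congrArg _ (Multiset.map_congr rfl (fun i _ => by ring))
  have hE : ∀ j, s.esymm j = rename Fin.castSucc (esymm (Fin n) (ZMod 2) j) := by
    intro j
    rw [rename, ← aeval_esymm_eq_multiset_esymm (Fin n) (ZMod 2) j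
      (fun i : Fin n => (X i.castSucc : MvPolynomial (Fin (n + 1)) (ZMod 2)))]
    exact congrFun (congrArg DFunLike.coe (rename_eq_aeval (R := ZMod 2) (Fin.castSucc : Fin n → Fin (n + 1)))).symm _
  have hR : Polynomial.eval (1 + t) (∑ j ∈ range (n + 1), Polynomial.C (s.esymm j) * Polynomial.X ^ (n - j))
      = ∑ j ∈ range (n + 1), rename Fin.castSucc (esymm (Fin n) (ZMod 2) j) * (1 + t) ^ (n - j) := by
    rw [Polynomial.eval_finset_sum]
    exact Finset.sum_congr rfl fun j _ => by rw [Polynomial.eval_mul, Polynomial.eval_C,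
      Polynomial.eval_pow, Polynomial.eval_X, hE]
  rw [hL, hR] at h2
  rw [h2]
  set e : ℕ → MvPolynomial (Fin (n + 1)) (ZMod 2) :=
    fun j => rename Fin.castSucc (esymm (Fin n) (ZMod 2) j) with he
  have hpow : ∀ m : ℕ, m ≤ n → (1 + t) ^ m =
      ∑ k ∈ range (n + 1), (Nat.choose m k : MvPolynomial (Fin (n+1)) (ZMod 2)) * t ^ k := by
    intro m hm
    rw [add_comm (1 : MvPolynomial (Fin (n+1)) (ZMod 2)) t, add_pow]
    rw [Finset.sum_subset (Finset.range_subset_range.2 (show m + 1 ≤ n + 1 by omega))]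
    · exact Finset.sum_congr rfl fun k _ => by ring
    · intro k _ hk
      rw [Finset.mem_range, not_lt] at hk
      rw [Nat.choose_eq_zero_of_lt (by omega)]
      simp
  have step1 : (∑ j ∈ range (n + 1), e j * (1 + t) ^ (n - j))
      = ∑ k ∈ range (n + 1), ∑ j ∈ range (n + 1),
          t ^ k * ((Nat.choose (n - j) k : MvPolynomial (Fin (n+1)) (ZMod 2)) * e j) := by
    rw [Finset.sum_comm]
    refine Finset.sum_congr rfl fun j hj => ?_
    rw [hpow (n - j) (by omega), Finset.mul_sum]
    exact Finset.sum_congr rfl fun k _ => by ring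
  rw [step1]
  rw [inductiveSum]
  refine Finset.sum_congr rfl fun k hk => ?_
  rw [Finset.mem_range] at hk
  have h3 : (∑ l ∈ range (n - k + 1),
        (Nat.choose (n - l) k : MvPolynomial (Fin (n+1)) (ZMod 2)) * e l)
      = ∑ l ∈ range (n + 1),
        (Nat.choose (n - l) k : MvPolynomial (Fin (n+1)) (ZMod 2)) * e l := by
    apply Finset.sum_subset (Finset.range_subset_range.2 (show n - k + 1 ≤ n + 1 by omega))
    intro l hl hl2
    rw [Finset.mem_range] at hl hl2
    rw [Nat.choose_eq_zero_of_lt (by omega)]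
    simp
  rw [show (X (Fin.last n) : MvPolynomial (Fin (n+1)) (ZMod 2)) = t from rfl]
  rw [h3, Finset.mul_sum]

/-- for a total number of variables `n + 1 ≥ 2`, the product
`∏_{1≤j<k≤n+1} (1 + t_j + t_k)` factors as the corresponding product over the
first `n` variables times `Σ_k tₙ₊₁^k Σ_l C(n−l,k) ē_l`; equivalently,
`∏_{i=1}^{n} (1 + t_i + tₙ₊₁)` equals this sum. -/
theorem product_inductive_step (n : ℕ) (hn : 1 ≤ n) :
    ((∏ p ∈ univ.filter (fun p : Fin (n + 1) × Fin (n + 1) => p.1 < p.2),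
        (1 + X p.1 + X p.2) : MvPolynomial (Fin (n + 1)) (ZMod 2)) =
      (∏ p ∈ univ.filter (fun p : Fin n × Fin n => p.1 < p.2),
        (1 + X p.1.castSucc + X p.2.castSucc)) * inductiveSum n) ∧
    ((∏ i : Fin n, (1 + X i.castSucc + X (Fin.last n)) :
        MvPolynomial (Fin (n + 1)) (ZMod 2)) = inductiveSum n) := by
  classical
  refine ⟨?_, key n⟩
  rw [← key n]
  rw [← Finset.prod_filter_mul_prod_filter_not
    (univ.filter (fun p : Fin (n + 1) × Fin (n + 1) => p.1 < p.2))
    (fun p => p.2 = Fin.last n)]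
  rw [mul_comm]
  congr 1
  · -- p.2 ≠ last part equals small pairs product
    refine Finset.prod_bij'
      (fun p hp => ((p.1.castLT ?_ : Fin n), (p.2.castLT ?_ : Fin n)))
      (fun q _ => (q.1.castSucc, q.2.castSucc)) ?_ ?_ ?_ ?_ ?_
    · simp only [Finset.mem_filter, Finset.mem_univ, true_and] at hp
      have h2 : p.2.val < n := Fin.val_lt_last hp.2
      exact lt_trans hp.1 h2
    · simp only [Finset.mem_filter, Finset.mem_univ, true_and] at hp
      exact Fin.val_lt_last hp.2
    · intro p hp
      simp only [Finset.mem_filter, Finset.mem_univ, true_and] at hp ⊢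
      exact hp.1
    · intro q hq
      simp only [Finset.mem_filter, Finset.mem_univ, true_and] at hq ⊢
      refine ⟨?_, ?_⟩
      · exact_mod_cast hq
      · intro h
        have := q.2.2
        simp [Fin.ext_iff, Fin.castSucc, Fin.last] at h
        omega
    · intro p hp; simp [Fin.ext_iff]
    · intro q hq; simp [Fin.ext_iff]
    · intro p hp; simp [Fin.ext_iff]
  · -- p.2 = last part equals ∏ i (1 + X i.castSucc + X last)
    refine Finset.prod_bij'
      (fun p hp => (p.1.castLT ?_ : Fin n))
      (fun i _ => (i.castSucc, Fin.last n)) ?_ ?_ ?_ ?_ ?_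
    · simp only [Finset.mem_filter, Finset.mem_univ, true_and] at hp
      rw [hp.2] at hp
      exact Fin.val_lt_last (Fin.ne_last_of_lt hp.1)
    · intro p hp; simp
    · intro i hi
      simp only [Finset.mem_filter, Finset.mem_univ, true_and]
      exact ⟨Fin.castSucc_lt_last i, trivial⟩
    · intro p hp
      simp only [Finset.mem_filter, Finset.mem_univ, true_and] at hp
      obtain ⟨h1, h2⟩ := hp
      rw [Prod.ext_iff]
      exact ⟨by ext; simp, h2.symm⟩
    · intro i hi; simp [Fin.ext_iff]
    · intro p hp
      simp only [Finset.mem_filter, Finset.mem_univ, true_and] at hp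
      simp [hp.2, Fin.ext_iff]
end

section
/- In 𝔽₂[t₁,…,t₉], the product ∏_{1≤j<k≤9} (1 + t_j + t_k) is congruent to (1 + e₄ + e₆ + e₇ + e₈)·(1 + e₄ + e₆ + e₇)⁴ modulo the ideal generated by e₁, e₂, e₃, e₅, e₉. -/
open MvPolynomial Finset

/-- The `i`-th elementary symmetric polynomial in `𝔽₂[t₁,…,t₉]`. -/
noncomputable def e (i : ℕ) : MvPolynomial (Fin 9) (ZMod 2) :=
  esymm (Fin 9) (ZMod 2) i

namespace Lambda2Spin9Aux

section KeyField

variable {K : Type*} [Field K] [IsAlgClosed K] [CharP K 2]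

lemma key_exists (a b c d : K) :
    ∃ r : Fin 9 → K,
      ((Finset.univ.val.map r).esymm 1 = 0 ∧
        (Finset.univ.val.map r).esymm 2 = 0 ∧
        (Finset.univ.val.map r).esymm 3 = 0 ∧
        (Finset.univ.val.map r).esymm 4 = a ∧
        (Finset.univ.val.map r).esymm 5 = 0 ∧
        (Finset.univ.val.map r).esymm 6 = b ∧
        (Finset.univ.val.map r).esymm 7 = c ∧
        (Finset.univ.val.map r).esymm 8 = d ∧
        (Finset.univ.val.map r).esymm 9 = 0) ∧
      ∏ p ∈ Finset.univ.filter (fun p : Fin 9 × Fin 9 => p.1 < p.2), (1 + r p.1 + r p.2)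
        = (1 + a + b + c + d) * (1 + a + b + c) ^ 4 := by
  classical
  have h2 : (2 : K) = 0 := CharTwo.two_eq_zero
  set g : Polynomial K := Polynomial.X ^ 8 + Polynomial.C a * Polynomial.X ^ 4 +
      Polynomial.C b * Polynomial.X ^ 2 + Polynomial.C c * Polynomial.X + Polynomial.C d
      with hgdef
  have hmonic : g.Monic := by
    unfold g
    monicity!
  have hdeg : g.natDegree = 8 := by
    unfold g
    compute_degree!
  have hsplits : g.Splits := IsAlgClosed.splits g
  have hcard : Multiset.card g.roots = 8 := by
    rw [Polynomial.splits_iff_card_roots.mp hsplits, hdeg]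
  set lst := g.roots.toList with hlst
  have hlen : lst.length = 8 := by rw [hlst, Multiset.length_toList, hcard]
  set θ : Fin 8 → K := fun i => lst.get (Fin.cast hlen.symm i) with hθ
  have hmapθ : Multiset.map θ (Finset.univ.val : Multiset (Fin 8)) = g.roots := by
    have huniv : (Finset.univ.val : Multiset (Fin 8)) = ↑(List.finRange 8) := rfl
    have hmapl : Multiset.map θ ↑(List.finRange 8) = ↑(List.map θ (List.finRange 8)) := rfl
    rw [huniv, hmapl, ← List.ofFn_eq_map]
    have hofn : List.ofFn θ = lst := by
      apply List.ext_get (by simp [hlen])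
      intro i h1 h2
      rw [List.get_ofFn]
      simp [hθ]
    rw [hofn, Multiset.coe_toList]
  have hfact : g = ∏ j : Fin 8, (Polynomial.X - Polynomial.C (θ j)) := by
    have h := hsplits.eq_prod_roots_of_monic hmonic
    rw [h, ← hmapθ, Multiset.map_map, Finset.prod_eq_multiset_prod]
    rfl
  have hCsub : ∀ t : K, (Polynomial.X : Polynomial K) - Polynomial.C t
      = Polynomial.X + Polynomial.C t := by
    intro t
    rw [sub_eq_add_neg, ← map_neg Polynomial.C, CharTwo.neg_eq]
  have hfact' : g = ∏ j : Fin 8, (Polynomial.X + Polynomial.C (θ j)) := by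
    rw [hfact]
    exact Finset.prod_congr rfl fun j _ => hCsub (θ j)
  have hevalg : ∀ x : K, g.eval x = ∏ j : Fin 8, (x + θ j) := by
    intro x
    conv_lhs => rw [hfact']
    rw [Polynomial.eval_prod]
    exact Finset.prod_congr rfl fun j _ => by simp
  have hevalg' : ∀ x : K, g.eval x = x ^ 8 + a * x ^ 4 + b * x ^ 2 + c * x + d := by
    intro x
    simp [hgdef]
  have hroot : ∀ j : Fin 8, g.eval (θ j) = 0 := by
    intro j
    rw [hevalg]
    apply Finset.prod_eq_zero (Finset.mem_univ j)
    exact CharTwo.add_self_eq_zero _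
  have hshift : ∀ x : K, g.eval (1 + x) = (1 + a + b + c) + g.eval x := by
    intro x
    rw [hevalg', hevalg']
    linear_combination (x * b + (2 * x + 3 * x ^ 2 + 2 * x ^ 3) * a + 4 * x + 14 * x ^ 2 +
      28 * x ^ 3 + 35 * x ^ 4 + 28 * x ^ 5 + 14 * x ^ 6 + 4 * x ^ 7) * h2
  set r : Fin 9 → K := Fin.cons 0 θ with hr
  have hmapr : (Finset.univ.val : Multiset (Fin 9)).map r = 0 ::ₘ g.roots := by
    rw [Fin.univ_succ, Finset.cons_val, Multiset.map_cons, Finset.map_val, Multiset.map_map]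
    have h0 : r 0 = 0 := Fin.cons_zero _ _
    rw [h0]
    congr 1
  have hXg : Polynomial.X * g = Polynomial.X ^ 9 + Polynomial.C a * Polynomial.X ^ 5 +
      Polynomial.C b * Polynomial.X ^ 3 + Polynomial.C c * Polynomial.X ^ 2 +
      Polynomial.C d * Polynomial.X ^ 1 := by
    rw [hgdef]; ring
  have hesymm : ∀ m : ℕ, m ≤ 9 →
      (Finset.univ.val.map r).esymm m = (Polynomial.X * g).coeff (9 - m) := by
    intro m hm
    have hc : Multiset.card ((Finset.univ.val : Multiset (Fin 9)).map r) = 9 := by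
      simp
    have h9 : 9 - m ≤ Multiset.card ((Finset.univ.val : Multiset (Fin 9)).map r) := by omega
    have hco := Multiset.prod_X_add_C_coeff ((Finset.univ.val : Multiset (Fin 9)).map r) h9
    rw [hc, Nat.sub_sub_self hm] at hco
    rw [← hco]
    congr 1
    rw [hmapr, Multiset.map_cons, Multiset.prod_cons, map_zero, add_zero, ← hmapθ,
      Multiset.map_map]
    congr 1
    conv_rhs => rw [hfact']
    rw [Finset.prod_eq_multiset_prod]
    rfl
  refine ⟨r, ⟨?_, ?_, ?_, ?_, ?_, ?_, ?_, ?_, ?_⟩, ?_⟩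
  · rw [hesymm 1 (by norm_num), hXg]
    simp [Polynomial.coeff_X_pow]
  · rw [hesymm 2 (by norm_num), hXg]
    simp [Polynomial.coeff_X_pow]
  · rw [hesymm 3 (by norm_num), hXg]
    simp [Polynomial.coeff_X_pow]
  · rw [hesymm 4 (by norm_num), hXg]
    simp [Polynomial.coeff_X_pow]
  · rw [hesymm 5 (by norm_num), hXg]
    simp [Polynomial.coeff_X_pow]
  · rw [hesymm 6 (by norm_num), hXg]
    simp [Polynomial.coeff_X_pow]
  · rw [hesymm 7 (by norm_num), hXg]
    simp [Polynomial.coeff_X_pow]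
  · rw [hesymm 8 (by norm_num), hXg]
    simp [Polynomial.coeff_X_pow]
  · rw [hesymm 9 (by norm_num), hXg]
    simp [Polynomial.coeff_X_pow]
  · -- the product computation
    have step1 : (∏ p ∈ Finset.univ.filter (fun p : Fin 9 × Fin 9 => p.1 < p.2),
        (1 + r p.1 + r p.2))
        = (∏ k : Fin 8, (1 + θ k)) *
          ∏ p ∈ Finset.univ.filter (fun p : Fin 8 × Fin 8 => p.1 < p.2),
            (1 + θ p.1 + θ p.2) := by
      rw [Finset.prod_filter, ← Finset.univ_product_univ, Finset.prod_product,
        Fin.prod_univ_succ]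
      congr 1
      · rw [Fin.prod_univ_succ, if_neg (lt_irrefl _), one_mul]
        apply Finset.prod_congr rfl
        intro k _
        rw [if_pos (Fin.succ_pos k)]
        simp [hr]
      · rw [Finset.prod_filter, ← Finset.univ_product_univ, Finset.prod_product]
        apply Finset.prod_congr rfl
        intro j _
        rw [Fin.prod_univ_succ, if_neg (Fin.not_lt_zero _), one_mul]
        apply Finset.prod_congr rfl
        intro k _
        by_cases h : j < k
        · rw [if_pos (by simpa [Fin.succ_lt_succ_iff] using h), if_pos h]
          simp [hr]
        · rw [if_neg (by simpa [Fin.succ_lt_succ_iff] using h), if_neg h]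
    set Pf8 : K := ∏ p ∈ Finset.univ.filter (fun p : Fin 8 × Fin 8 => p.1 < p.2),
      (1 + θ p.1 + θ p.2) with hPf8def
    have hfull : (∏ p ∈ (Finset.univ : Finset (Fin 8 × Fin 8)), (1 + θ p.1 + θ p.2))
        = ∏ j : Fin 8, ∏ k : Fin 8, (1 + θ j + θ k) := by
      rw [← Finset.univ_product_univ, Finset.prod_product]
    have hsq : Pf8 ^ 2 = ∏ j : Fin 8, ∏ k : Fin 8, (1 + θ j + θ k) := by
      rw [← hfull,
        ← Finset.prod_filter_mul_prod_filter_not (Finset.univ : Finset (Fin 8 × Fin 8))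
          (fun p => p.1 < p.2) (fun p => 1 + θ p.1 + θ p.2),
        ← Finset.prod_filter_mul_prod_filter_not
          (Finset.univ.filter fun p : Fin 8 × Fin 8 => ¬p.1 < p.2)
          (fun p => p.2 < p.1) (fun p => 1 + θ p.1 + θ p.2)]
      have hdiag : ∏ p ∈ ((Finset.univ.filter fun p : Fin 8 × Fin 8 => ¬p.1 < p.2).filter
          fun p => ¬p.2 < p.1), (1 + θ p.1 + θ p.2) = 1 := by
        apply Finset.prod_eq_one
        intro p hp
        simp only [Finset.mem_filter] at hp
        have hpe : p.1 = p.2 := le_antisymm (not_lt.mp hp.2) (not_lt.mp hp.1.2)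
        rw [hpe, add_assoc, CharTwo.add_self_eq_zero, add_zero]
      rw [hdiag, mul_one]
      have hswap : ∏ p ∈ ((Finset.univ.filter fun p : Fin 8 × Fin 8 => ¬p.1 < p.2).filter
          fun p => p.2 < p.1), (1 + θ p.1 + θ p.2) = Pf8 := by
        rw [hPf8def]
        refine Finset.prod_nbij' Prod.swap Prod.swap ?_ ?_ ?_ ?_ ?_
        · intro p hp
          simp only [Finset.mem_filter, Finset.mem_univ, true_and] at hp ⊢
          exact hp.2
        · intro p hp
          simp only [Finset.mem_filter, Finset.mem_univ, true_and] at hp ⊢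
          exact ⟨not_lt.mpr hp.le, hp⟩
        · intro p _; exact Prod.swap_swap p
        · intro p _; exact Prod.swap_swap p
        · intro p _
          simp only [Prod.fst_swap, Prod.snd_swap]
          rw [add_right_comm]
      rw [hswap]
      ring
    have hBpow : (∏ j : Fin 8, ∏ k : Fin 8, (1 + θ j + θ k)) = (1 + a + b + c) ^ 8 := by
      have hj : ∀ j : Fin 8, ∏ k : Fin 8, (1 + θ j + θ k) = 1 + a + b + c := by
        intro j
        have h1 : ∏ k : Fin 8, (1 + θ j + θ k) = g.eval (1 + θ j) := (hevalg (1 + θ j)).symm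
        rw [h1, hshift, hroot, add_zero]
      rw [Finset.prod_congr rfl fun j _ => hj j, Finset.prod_const]
      simp
    have hPfsq : Pf8 ^ 2 = ((1 + a + b + c) ^ 4) ^ 2 := by rw [hsq, hBpow]; ring
    have hz : (Pf8 - (1 + a + b + c) ^ 4) ^ 2 = 0 := by
      linear_combination hPfsq +
        ((1 + a + b + c) ^ 4 * (1 + a + b + c) ^ 4 - Pf8 * (1 + a + b + c) ^ 4) * h2
    have hPf : Pf8 = (1 + a + b + c) ^ 4 := by
      have h0 := pow_eq_zero_iff (n := 2) (by norm_num) |>.mp hz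
      exact sub_eq_zero.mp h0
    have hAval : (∏ k : Fin 8, (1 + θ k)) = 1 + a + b + c + d := by
      have h1 : (∏ k : Fin 8, ((1 : K) + θ k)) = g.eval 1 := (hevalg 1).symm
      rw [h1, hevalg']
      ring
    rw [step1, hPf, hAval]

end KeyField

noncomputable def PPoly : MvPolynomial (Fin 9) (ZMod 2) :=
  ∏ p ∈ Finset.univ.filter (fun p : Fin 9 × Fin 9 => p.1 < p.2), (1 + X p.1 + X p.2)

noncomputable def RHSpoly : MvPolynomial (Fin 9) (ZMod 2) :=
  (1 + e 4 + e 6 + e 7 + e 8) * (1 + e 4 + e 6 + e 7) ^ 4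

noncomputable def Ebasis : Fin 9 → MvPolynomial (Fin 9) (ZMod 2) :=
  fun i => esymm (Fin 9) (ZMod 2) (↑i + 1)

def badF : Finset (Fin 9) := {0, 1, 2, 4, 8}

noncomputable def subf : Fin 9 → MvPolynomial (Fin 9) (ZMod 2) :=
  fun i => if i ∈ badF then 0 else X i

lemma ppoly_symm : PPoly.IsSymmetric := by
  intro σp
  rw [PPoly, map_prod]
  simp only [map_add, map_one, rename_X]
  refine Finset.prod_nbij'
    (fun p => if σp p.1 < σp p.2 then (σp p.1, σp p.2) else (σp p.2, σp p.1))
    (fun q => if σp.symm q.1 < σp.symm q.2 then (σp.symm q.1, σp.symm q.2)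
      else (σp.symm q.2, σp.symm q.1)) ?_ ?_ ?_ ?_ ?_
  · intro p hp
    simp only [Finset.mem_filter, Finset.mem_univ, true_and] at hp ⊢
    split_ifs with h
    · simpa using h
    · have hne : σp p.2 ≠ σp p.1 := fun hc => (ne_of_lt hp) (σp.injective hc).symm
      simpa using lt_of_le_of_ne (not_lt.mp h) hne
  · intro q hq
    simp only [Finset.mem_filter, Finset.mem_univ, true_and] at hq ⊢
    split_ifs with h
    · simpa using h
    · have hne : σp.symm q.2 ≠ σp.symm q.1 := fun hc => (ne_of_lt hq) (σp.symm.injective hc).symm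
      simpa using lt_of_le_of_ne (not_lt.mp h) hne
  · intro p hp
    simp only [Finset.mem_filter, Finset.mem_univ, true_and] at hp
    by_cases h : σp p.1 < σp p.2
    · rw [if_pos h]
      dsimp only
      simp only [Equiv.symm_apply_apply]
      rw [if_pos hp]
    · rw [if_neg h]
      dsimp only
      simp only [Equiv.symm_apply_apply]
      rw [if_neg (not_lt.mpr hp.le)]
  · intro q hq
    simp only [Finset.mem_filter, Finset.mem_univ, true_and] at hq
    by_cases h : σp.symm q.1 < σp.symm q.2
    · rw [if_pos h]
      dsimp only
      simp only [Equiv.apply_symm_apply]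
      rw [if_pos hq]
    · rw [if_neg h]
      dsimp only
      simp only [Equiv.apply_symm_apply]
      rw [if_neg (not_lt.mpr hq.le)]
  · intro p _
    split_ifs with h
    · rfl
    · rw [add_right_comm]

lemma rhs_symm : RHSpoly.IsSymmetric := by
  intro σp
  rw [RHSpoly]
  simp only [map_mul, map_pow, map_add, map_one, e, rename_esymm]

lemma sub_mem (p : MvPolynomial (Fin 9) (ZMod 2)) :
    p - aeval subf p ∈
      Ideal.span ({X 0, X 1, X 2, X 4, X 8} : Set (MvPolynomial (Fin 9) (ZMod 2))) := by
  induction p using MvPolynomial.induction_on with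
  | C r =>
    rw [aeval_C, MvPolynomial.algebraMap_eq, sub_self]
    exact Ideal.zero_mem _
  | add p q hp hq =>
    rw [map_add]
    have hrw : p + q - (aeval subf p + aeval subf q)
        = (p - aeval subf p) + (q - aeval subf q) := by ring
    rw [hrw]
    exact Ideal.add_mem _ hp hq
  | mul_X p i hp =>
    rw [map_mul, aeval_X]
    by_cases hb : i ∈ badF
    · rw [subf, if_pos hb, mul_zero, sub_zero]
      refine Ideal.mul_mem_left _ p (Ideal.subset_span ?_)
      have : i = 0 ∨ i = 1 ∨ i = 2 ∨ i = 4 ∨ i = 8 := by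
        simpa [badF] using hb
      rcases this with rfl | rfl | rfl | rfl | rfl <;> simp
    · rw [subf, if_neg hb]
      have hrw : p * X i - aeval subf p * X i = (p - aeval subf p) * X i := by ring
      rw [hrw]
      exact Ideal.mul_mem_right _ _ hp

end Lambda2Spin9Aux

open Lambda2Spin9Aux in
/-- in `𝔽₂[t₁,…,t₉]`, `∏_{1≤j<k≤9} (1 + t_j + t_k)` is congruent
to `(1 + e₄ + e₆ + e₇ + e₈)·(1 + e₄ + e₆ + e₇)⁴` modulo the ideal
`(e₁, e₂, e₃, e₅, e₉)`. -/
theorem lambda2_spin9 :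
    (∏ p ∈ univ.filter (fun p : Fin 9 × Fin 9 => p.1 < p.2),
        (1 + X p.1 + X p.2) : MvPolynomial (Fin 9) (ZMod 2))
      - (1 + e 4 + e 6 + e 7 + e 8) * (1 + e 4 + e 6 + e 7) ^ 4
      ∈ Ideal.span {e 1, e 2, e 3, e 5, e 9} := by
  classical
  show PPoly - RHSpoly ∈ Ideal.span {e 1, e 2, e 3, e 5, e 9}
  have hy : (PPoly - RHSpoly).IsSymmetric := ppoly_symm.sub rhs_symm
  obtain ⟨G, hG⟩ := esymmAlgHom_surjective (σ := Fin 9) (R := ZMod 2) (n := 9) (by simp)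
    ⟨PPoly - RHSpoly, hy⟩
  have hGy : aeval Ebasis G = PPoly - RHSpoly := by
    have h := congrArg Subtype.val hG
    rwa [esymmAlgHom_apply] at h
  set K := AlgebraicClosure (ZMod 2) with hK
  -- the substituted polynomial is zero
  have hG0 : aeval subf G = 0 := by
    have hinj : Function.Injective (algebraMap (ZMod 2) K) := (algebraMap (ZMod 2) K).injective
    apply MvPolynomial.map_injective _ hinj
    rw [map_zero]
    apply MvPolynomial.funext
    intro w
    rw [map_zero]
    obtain ⟨r, ⟨k1, k2, k3, k4, k5, k6, k7, k8, k9⟩, kprod⟩ :=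
      key_exists (K := K) (w 3) (w 5) (w 6) (w 7)
    have hesymmval : ∀ m : ℕ, aeval r (esymm (Fin 9) (ZMod 2) m) = (univ.val.map r).esymm m :=
      fun m => aeval_esymm_eq_multiset_esymm _ _ m r
    have hψPP : aeval r PPoly = (1 + w 3 + w 5 + w 6 + w 7) * (1 + w 3 + w 5 + w 6) ^ 4 := by
      rw [PPoly, map_prod, ← kprod]
      apply Finset.prod_congr rfl
      intro p _
      simp
    have hψRHS : aeval r RHSpoly
        = (1 + w 3 + w 5 + w 6 + w 7) * (1 + w 3 + w 5 + w 6) ^ 4 := by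
      rw [RHSpoly]
      simp only [map_mul, map_pow, map_add, map_one, e]
      rw [hesymmval 4, hesymmval 6, hesymmval 7, hesymmval 8, k4, k6, k7, k8]
    have hψy : aeval r (aeval Ebasis G) = 0 := by
      rw [hGy, map_sub, hψPP, hψRHS, sub_self]
    have hcomp2 : aeval r (aeval Ebasis G) = aeval (fun i : Fin 9 => aeval r (Ebasis i)) G := by
      have hc := MvPolynomial.comp_aeval (f := Ebasis)
        (φ := (aeval r : MvPolynomial (Fin 9) (ZMod 2) →ₐ[ZMod 2] K))
      have h := AlgHom.congr_fun hc G
      rwa [AlgHom.comp_apply] at h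
    have hval : ∀ i : Fin 9, aeval r (Ebasis i) = (if i ∈ badF then 0 else w i) := by
      intro i
      fin_cases i
      · show aeval r (Ebasis 0) = if (0 : Fin 9) ∈ badF then 0 else w 0
        rw [show Ebasis 0 = esymm (Fin 9) (ZMod 2) 1 from rfl, hesymmval 1, k1]
        simp [badF]
      · show aeval r (Ebasis 1) = if (1 : Fin 9) ∈ badF then 0 else w 1
        rw [show Ebasis 1 = esymm (Fin 9) (ZMod 2) 2 from rfl, hesymmval 2, k2]
        simp [badF]
      · show aeval r (Ebasis 2) = if (2 : Fin 9) ∈ badF then 0 else w 2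
        rw [show Ebasis 2 = esymm (Fin 9) (ZMod 2) 3 from rfl, hesymmval 3, k3]
        simp [badF]
      · show aeval r (Ebasis 3) = if (3 : Fin 9) ∈ badF then 0 else w 3
        rw [show Ebasis 3 = esymm (Fin 9) (ZMod 2) 4 from rfl, hesymmval 4, k4]
        simp [badF]
      · show aeval r (Ebasis 4) = if (4 : Fin 9) ∈ badF then 0 else w 4
        rw [show Ebasis 4 = esymm (Fin 9) (ZMod 2) 5 from rfl, hesymmval 5, k5]
        simp [badF]
      · show aeval r (Ebasis 5) = if (5 : Fin 9) ∈ badF then 0 else w 5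
        rw [show Ebasis 5 = esymm (Fin 9) (ZMod 2) 6 from rfl, hesymmval 6, k6]
        simp [badF]
      · show aeval r (Ebasis 6) = if (6 : Fin 9) ∈ badF then 0 else w 6
        rw [show Ebasis 6 = esymm (Fin 9) (ZMod 2) 7 from rfl, hesymmval 7, k7]
        simp [badF]
      · show aeval r (Ebasis 7) = if (7 : Fin 9) ∈ badF then 0 else w 7
        rw [show Ebasis 7 = esymm (Fin 9) (ZMod 2) 8 from rfl, hesymmval 8, k8]
        simp [badF]
      · show aeval r (Ebasis 8) = if (8 : Fin 9) ∈ badF then 0 else w 8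
        rw [show Ebasis 8 = esymm (Fin 9) (ZMod 2) 9 from rfl, hesymmval 9, k9]
        simp [badF]
    have h1 : eval w (MvPolynomial.map (algebraMap (ZMod 2) K) (aeval subf G))
        = aeval w (aeval subf G) := by
      rw [MvPolynomial.eval_map]
      rfl
    have h2 : aeval w (aeval subf G) = aeval (fun i => if i ∈ badF then 0 else w i) G := by
      have hc := MvPolynomial.comp_aeval (f := subf)
        (φ := (aeval w : MvPolynomial (Fin 9) (ZMod 2) →ₐ[ZMod 2] K))
      have h := AlgHom.congr_fun hc G
      rw [AlgHom.comp_apply] at h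
      have hfun : (fun i : Fin 9 => aeval w (subf i)) = (fun i => if i ∈ badF then 0 else w i) := by
        funext i
        by_cases hb : i ∈ badF <;> simp [subf, hb]
      rw [h, hfun]
    rw [h1, h2, show (fun i => if i ∈ badF then 0 else w i) = fun i : Fin 9 => aeval r (Ebasis i)
      from (funext hval).symm, ← hcomp2, hψy]
  -- assemble
  have hfin : PPoly - RHSpoly = aeval Ebasis (G - aeval subf G) := by
    rw [map_sub, hGy, hG0, map_zero, sub_zero]
  rw [hfin]
  have hmem := sub_mem G
  have hmap := Ideal.mem_map_of_mem
    ((aeval Ebasis : MvPolynomial (Fin 9) (ZMod 2) →ₐ[ZMod 2] _).toRingHom) hmem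
  rw [Ideal.map_span] at hmap
  have himg : (⇑(aeval Ebasis : MvPolynomial (Fin 9) (ZMod 2) →ₐ[ZMod 2]
        MvPolynomial (Fin 9) (ZMod 2)).toRingHom) ''
        ({X 0, X 1, X 2, X 4, X 8} : Set (MvPolynomial (Fin 9) (ZMod 2)))
      = ({e 1, e 2, e 3, e 5, e 9} : Set (MvPolynomial (Fin 9) (ZMod 2))) := by
    simp only [Set.image_insert_eq, Set.image_singleton, AlgHom.toRingHom_eq_coe,
      RingHom.coe_coe, aeval_X]
    rfl
  rw [himg] at hmap
  exact hmap
end
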